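/- Let α > 0 and define on a tubular neighborhood S_α of a surface M the field (F_η b)(x) := exp(−∫_{η(q(x))}^{s(x)} (div(ν ∘ q))(q(x) + τ ν(q(x))) dτ) · (b ν)(q(x)), where x = q(x) + s(x) ν(q(x)) are tubular coordinates and b : M → ℝ. Then F_η b is divergence free: div(F_η b) = 0 in S_α (whenever b, η, and the geometry are regular enough for the classical computation, e.g. b ∈ C¹, η ∈ C¹, M a C² surface). -/

import Mathlib

open scoped RealInnerProductSpace Topology

set_option maxHeartbeats 1000000

/-- The transported boundary field
`F_η b (x) = exp(−∫_{η(q x)}^{s x} div(ν∘q)(q x + τ ν(q x)) dτ) · (b ν)(q x)`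
is divergence free on the tubular neighbourhood `S_α`: here `q`, `s` are the
tubular coordinates (`x = q x + s x • N x` with `N = ν ∘ q` the unit normal
transported along normal lines) and `D = div N`. -/
theorem extension_field_divergence_free
    (Sα : Set (EuclideanSpace ℝ (Fin 3))) (hS : IsOpen Sα)
    (q N : EuclideanSpace ℝ (Fin 3) → EuclideanSpace ℝ (Fin 3))
    (s η b : EuclideanSpace ℝ (Fin 3) → ℝ)
    (hq : DifferentiableOn ℝ q Sα) (hs : DifferentiableOn ℝ s Sα)
    (hN : DifferentiableOn ℝ N Sα)
    (hb : Differentiable ℝ b) (hη : Differentiable ℝ η)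
    (hunit : ∀ x ∈ Sα, ‖N x‖ = 1)
    (hrep : ∀ x ∈ Sα, q x + s x • N x = x)
    (hline : ∀ x ∈ Sα, ∀ τ : ℝ, q x + τ • N x ∈ Sα →
      q (q x + τ • N x) = q x ∧ s (q x + τ • N x) = τ ∧ N (q x + τ • N x) = N x)
    (hseg : ∀ x ∈ Sα, ∀ τ ∈ Set.uIcc (η (q x)) (s x), q x + τ • N x ∈ Sα)
    (D : EuclideanSpace ℝ (Fin 3) → ℝ)
    (hD : ∀ x ∈ Sα,
      D x = ∑ i : Fin 3, fderiv ℝ N x (EuclideanSpace.single i 1) i)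
    (hDc : ContinuousOn D Sα)
    (F : EuclideanSpace ℝ (Fin 3) → EuclideanSpace ℝ (Fin 3))
    (hF : ∀ x ∈ Sα, F x =
      Real.exp (-∫ τ in (η (q x))..(s x), D (q x + τ • N x)) •
        (b (q x) • N x)) :
    ∀ x ∈ Sα, (∑ i : Fin 3, fderiv ℝ F x (EuclideanSpace.single i 1) i) = 0 := by
  intro x hx
  by_cases hdiff : DifferentiableAt ℝ F x
  · have hxn : Sα ∈ 𝓝 x := hS.mem_nhds hx
    have hNx : DifferentiableAt ℝ N x := (hN x hx).differentiableAt hxn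
    set H : EuclideanSpace ℝ (Fin 3) → ℝ := fun y => (inner ℝ (F y) (N y) : ℝ) with hHdef
    have hHx : DifferentiableAt ℝ H x := hdiff.inner ℝ hNx
    -- value of H on Sα
    have key : ∀ y ∈ Sα, H y =
        Real.exp (-∫ τ in (η (q y))..(s y), D (q y + τ • N y)) * b (q y) := by
      intro y hy
      have hn : ‖N y‖ = 1 := hunit y hy
      show (inner ℝ (F y) (N y) : ℝ) = _
      rw [hF y hy, smul_smul, real_inner_smul_left, real_inner_self_eq_norm_sq, hn]
      ring
    have heq : ∀ y ∈ Sα, F y = H y • N y := by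
      intro y hy
      rw [key y hy, hF y hy, smul_smul]
    have hev : F =ᶠ[𝓝 x] fun y => H y • N y :=
      Filter.eventuallyEq_of_mem hxn heq
    have hFd : HasFDerivAt F
        (H x • fderiv ℝ N x + (fderiv ℝ H x).smulRight (N x)) x :=
      (hHx.hasFDerivAt.smul hNx.hasFDerivAt).congr_of_eventuallyEq hev
    -- derivative along the normal line
    have hLcont : Continuous fun τ : ℝ => q x + τ • N x :=
      continuous_const.add (continuous_id.smul continuous_const)
    have hU : IsOpen ((fun τ : ℝ => q x + τ • N x) ⁻¹' Sα) := hS.preimage hLcont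
    have hLs : q x + (s x) • N x = x := hrep x hx
    have hsxU : s x ∈ (fun τ : ℝ => q x + τ • N x) ⁻¹' Sα := by
      simp only [Set.mem_preimage, hLs]; exact hx
    have hg : ContinuousOn (fun τ : ℝ => D (q x + τ • N x))
        ((fun τ : ℝ => q x + τ • N x) ⁻¹' Sα) :=
      hDc.comp hLcont.continuousOn fun τ hτ => hτ
    have hint : IntervalIntegrable (fun τ : ℝ => D (q x + τ • N x))
        MeasureTheory.volume (η (q x)) (s x) :=
      (hDc.comp hLcont.continuousOn fun τ hτ => hseg x hx τ hτ).intervalIntegrable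
    have hmeas : StronglyMeasurableAtFilter (fun τ : ℝ => D (q x + τ • N x))
        (𝓝 (s x)) MeasureTheory.volume :=
      hg.stronglyMeasurableAtFilter hU _ hsxU
    have hca : ContinuousAt (fun τ : ℝ => D (q x + τ • N x)) (s x) :=
      hg.continuousAt (hU.mem_nhds hsxU)
    have hI : HasDerivAt (fun u : ℝ => ∫ τ in (η (q x))..u, D (q x + τ • N x))
        (D x) (s x) := by
      have := intervalIntegral.integral_hasDerivAt_right hint hmeas hca
      rwa [hLs] at this
    have hc' : HasDerivAt (fun t : ℝ => s x + t) 1 0 :=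
      (hasDerivAt_id (0 : ℝ)).const_add (s x)
    have hI2 : HasDerivAt
        (fun t : ℝ => ∫ τ in (η (q x))..(s x + t), D (q x + τ • N x)) (D x) 0 := by
      have h0 : HasDerivAt (fun u : ℝ => ∫ τ in (η (q x))..u, D (q x + τ • N x))
          (D x) (s x + 0) := by simpa using hI
      have h1 := h0.comp 0 hc'
      rw [mul_one] at h1
      exact h1
    have hφ : HasDerivAt
        (fun t : ℝ => b (q x) *
          Real.exp (-∫ τ in (η (q x))..(s x + t), D (q x + τ • N x)))
        (b (q x) * (Real.exp (-∫ τ in (η (q x))..(s x), D (q x + τ • N x)) * (-D x)))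
        0 := by
      have := (hI2.neg.exp).const_mul (b (q x))
      simpa [mul_comm, mul_left_comm, mul_assoc] using this
    have hcder : HasDerivAt (fun t : ℝ => x + t • N x) (N x) 0 := by
      simpa using ((hasDerivAt_id (0 : ℝ)).smul_const (N x)).const_add x
    have hHx' : HasFDerivAt H (fderiv ℝ H x) ((fun t : ℝ => x + t • N x) 0) := by
      simpa using hHx.hasFDerivAt
    have hcomp : HasDerivAt (fun t : ℝ => H (x + t • N x)) (fderiv ℝ H x (N x)) 0 :=
      hHx'.comp_hasDerivAt (f := fun t : ℝ => x + t • N x) 0 hcder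
    have hmem : ∀ᶠ t : ℝ in 𝓝 0, x + t • N x ∈ Sα := by
      have hc : ContinuousAt (fun t : ℝ => x + t • N x) 0 :=
        (continuous_const.add (continuous_id.smul continuous_const)).continuousAt
      have := hc.preimage_mem_nhds (by simpa using hxn)
      exact this
    have hHline : (fun t : ℝ => H (x + t • N x)) =ᶠ[𝓝 0]
        (fun t : ℝ => b (q x) *
          Real.exp (-∫ τ in (η (q x))..(s x + t), D (q x + τ • N x))) := by
      filter_upwards [hmem] with t ht
      have hy : q x + (s x + t) • N x = x + t • N x := by
        rw [add_smul, ← add_assoc, hLs]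
      obtain ⟨hq', hs', hN'⟩ := hline x hx (s x + t) (by rwa [hy])
      rw [hy] at hq' hs' hN'
      rw [key _ ht, hq', hs', hN', mul_comm]
    have huniq : fderiv ℝ H x (N x) =
        b (q x) * (Real.exp (-∫ τ in (η (q x))..(s x), D (q x + τ • N x)) * (-D x)) :=
      hcomp.unique (hφ.congr_of_eventuallyEq hHline)
    have hHval : H x =
        Real.exp (-∫ τ in (η (q x))..(s x), D (q x + τ • N x)) * b (q x) := key x hx
    -- assemble
    rw [hFd.fderiv]
    have hsum : ∀ i : Fin 3,
        ((H x • fderiv ℝ N x + (fderiv ℝ H x).smulRight (N x))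
          (EuclideanSpace.single i 1)) i
        = H x * fderiv ℝ N x (EuclideanSpace.single i 1) i
          + fderiv ℝ H x (EuclideanSpace.single i 1) * N x i := by
      intro i
      simp [ContinuousLinearMap.add_apply, ContinuousLinearMap.smul_apply,
        ContinuousLinearMap.smulRight_apply, PiLp.add_apply, PiLp.smul_apply,
        smul_eq_mul]
    rw [Finset.sum_congr rfl fun i _ => hsum i, Finset.sum_add_distrib,
      ← Finset.mul_sum, ← hD x hx]
    have hrepr : N x = ∑ i : Fin 3, N x i • EuclideanSpace.single i 1 := by
      have h := (EuclideanSpace.basisFun (Fin 3) ℝ).sum_repr (N x)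
      simp only [EuclideanSpace.basisFun_repr, EuclideanSpace.basisFun_apply] at h
      exact h.symm
    have hNsum : ∑ i : Fin 3, fderiv ℝ H x (EuclideanSpace.single i 1) * N x i
        = fderiv ℝ H x (N x) := by
      conv_rhs => rw [hrepr]
      rw [map_sum]
      exact Finset.sum_congr rfl fun i _ => by rw [map_smul]; simp [mul_comm]
    rw [hNsum, huniq, hHval]
    ring
  · rw [fderiv_zero_of_not_differentiableAt hdiff]
    simp
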